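/- Let H and Q be groups and π : H → Q a surjective group homomorphism with finite kernel K. Suppose Q₀ is a subgroup of Q of finite index that is a free group. Then H has a subgroup H₀ of finite index that is a free group, and the index of H₀ in H can be taken to equal |K| · [Q : Q₀]. -/

import Mathlib

/-- If `π : H → Q` is surjective with finite kernel and `Q₀ ≤ Q` is a free subgroup of
finite index, then `H` has a free subgroup `H₀` of finite index, with
`[H : H₀] = |ker π| · [Q : Q₀]`. -/
theorem virtually_free_lifts_through_finite_kernel
    {H Q : Type*} [Group H] [Group Q] (π : H →* Q)
    (hsurj : Function.Surjective π) (hker : Finite π.ker)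
    (Q₀ : Subgroup Q) (hQ₀fi : Q₀.FiniteIndex) (hQ₀free : IsFreeGroup Q₀) :
    ∃ H₀ : Subgroup H, H₀.FiniteIndex ∧ IsFreeGroup H₀ ∧
      H₀.index = Nat.card π.ker * Q₀.index := by
  classical
  set H₁ : Subgroup H := Q₀.comap π with hH₁
  have hmem : ∀ h : H₁, π.domRestrict H₁ h ∈ Q₀ := fun h => h.2
  let π' : H₁ →* Q₀ := (π.domRestrict H₁).codRestrict Q₀ hmem
  have hπ'app : ∀ h : H₁, (π' h : Q) = π h := fun h => rfl
  have hπ'surj : Function.Surjective π' := by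
    intro q
    obtain ⟨h, hh⟩ := hsurj (q : Q)
    refine ⟨⟨h, by simp [hH₁, Subgroup.mem_comap, hh]⟩, ?_⟩
    ext
    simpa [hπ'app] using hh
  haveI := hQ₀free
  let s : Q₀ →* H₁ := IsFreeGroup.lift fun g => (hπ'surj (IsFreeGroup.of g)).choose
  have hsec : π'.comp s = MonoidHom.id Q₀ :=
    IsFreeGroup.ext_hom fun g => by
      simp [s, (hπ'surj (IsFreeGroup.of g)).choose_spec]
  have hsec' : ∀ q, π' (s q) = q := fun q => DFunLike.congr_fun hsec q
  have hsinj : Function.Injective s := fun a b hab => by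
    rw [← hsec' a, ← hsec' b, hab]
  let H₀' : Subgroup H₁ := s.range
  let H₀ : Subgroup H := H₀'.map H₁.subtype
  -- H₀ is free
  have hrange : (H₁.subtype.comp s).range = H₀ := by
    rw [MonoidHom.range_comp]
  have hinj : Function.Injective (H₁.subtype.comp s) :=
    H₁.subtype_injective.comp hsinj
  have hfree : IsFreeGroup H₀ := by
    have e : Q₀ ≃* H₀ := hrange ▸ MonoidHom.ofInjective hinj
    exact IsFreeGroup.ofMulEquiv e
  -- complement: ker π' and range s
  have hcompl : Subgroup.IsComplement' π'.ker H₀' := by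
    apply Subgroup.isComplement'_of_disjoint_and_mul_eq_univ
    · rw [disjoint_iff_inf_le]
      rintro x ⟨hx1, q, rfl⟩
      have : q = 1 := by
        have hq : π' (s q) = 1 := hx1
        rwa [hsec'] at hq
      simp [this]
    · rw [Set.eq_univ_iff_forall]
      intro h
      exact ⟨h * (s (π' h))⁻¹, by
        simp [MonoidHom.mem_ker, hsec'], s (π' h), ⟨π' h, rfl⟩, by group⟩
  -- ker π' has the same cardinality as ker π
  have hkerle : π.ker ≤ H₁ := by
    intro x hx
    simp [hH₁, Subgroup.mem_comap, MonoidHom.mem_ker.mp hx, Q₀.one_mem]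
  have hker' : π'.ker = π.ker.subgroupOf H₁ := by
    ext x
    simp only [MonoidHom.mem_ker, Subgroup.mem_subgroupOf]
    constructor
    · intro hx
      have := congrArg (Subtype.val) hx
      simpa [hπ'app] using this
    · intro hx
      ext
      simpa [hπ'app] using hx
  have hcardker : Nat.card π'.ker = Nat.card π.ker := by
    rw [hker']
    exact Nat.card_congr (Subgroup.subgroupOfEquivOfLe hkerle).toEquiv
  -- index computations
  have hidx1 : H₁.index = Q₀.index := Subgroup.index_comap_of_surjective Q₀ hsurj
  have hsub : H₀.subgroupOf H₁ = H₀' :=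
    Subgroup.comap_map_eq_self_of_injective H₁.subtype_injective H₀'
  have hrel : H₀.relIndex H₁ = Nat.card π.ker := by
    rw [Subgroup.relIndex, hsub, hcompl.index_eq_card, hcardker]
  have hle : H₀ ≤ H₁ := by
    rintro x ⟨y, hy, rfl⟩
    exact y.2
  have hidx : H₀.index = Nat.card π.ker * Q₀.index := by
    rw [← Subgroup.relIndex_mul_index hle, hrel, hidx1]
  refine ⟨H₀, ⟨?_⟩, hfree, hidx⟩
  rw [hidx]
  have h1 : Nat.card π.ker ≠ 0 := Nat.card_ne_zero.mpr ⟨⟨1⟩, hker⟩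
  exact mul_ne_zero h1 hQ₀fi.index_ne_zero
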